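/- Let K : S × S → ℝ be a bounded symmetric measurable kernel, G a probability measure on S, and X_1,…,X_n independent random variables each distributed according to a probability measure F on S. Then the V-statistic V_n = (1/n²) Σ_{i=1}^n Σ_{j=1}^n K_{cen(G)}(X_i, X_j) is a biased estimator of the quadratic distance, with E[V_n] = ((n−1)/n) d_K(F,G) + (1/n) ∫ K_{cen(G)}(x,x) dF(x). -/

import Mathlib

open MeasureTheory ProbabilityTheory

/-- The quadratic distance d_K(F,G) = ∬ K(s,t) d(F−G)(s) d(F−G)(t), written as the
iterated integral of s ↦ ∫ K(s,t) d(F−G)(t) against the signed measure F−G. -/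
noncomputable def quadDist {S : Type*} [MeasurableSpace S] (K : S → S → ℝ)
    (F G : Measure S) : ℝ :=
  (∫ s, (∫ t, K s t ∂F - ∫ t, K s t ∂G) ∂F) - ∫ s, (∫ t, K s t ∂F - ∫ t, K s t ∂G) ∂G

/-- The G-centered kernel
K_{cen(G)}(x,y) = K(x,y) − K(x,G) − K(G,y) + K(G,G). -/
noncomputable def kcen {S : Type*} [MeasurableSpace S] (K : S → S → ℝ) (G : Measure S)
    (x y : S) : ℝ :=
  K x y - ∫ t, K x t ∂G - ∫ s, K s y ∂G + ∫ s, ∫ t, K s t ∂G ∂G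

private lemma integrable_of_bdd {α : Type*} [MeasurableSpace α] {μ : Measure α}
    [IsFiniteMeasure μ] {f : α → ℝ} (hf : AEStronglyMeasurable f μ) {C : ℝ}
    (h : ∀ x, |f x| ≤ C) : Integrable f μ :=
  ⟨hf, HasFiniteIntegral.of_bounded (C := C) (ae_of_all _ fun x => by simpa using h x)⟩

private lemma int_bound {α : Type*} [MeasurableSpace α] {μ : Measure α}
    [IsProbabilityMeasure μ] {f : α → ℝ} {C : ℝ} (h : ∀ x, |f x| ≤ C) :
    |∫ x, f x ∂μ| ≤ C := by
  have := norm_integral_le_of_norm_le_const (μ := μ) (f := f) (C := C)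
    (ae_of_all _ fun x => by simpa using h x)
  simpa using this

/-- for X_1,…,X_n i.i.d. with law F, the V-statistic
V_n = (1/n²) Σ_i Σ_j K_{cen(G)}(X_i,X_j) has expectation
E[V_n] = ((n−1)/n) d_K(F,G) + (1/n) ∫ K_{cen(G)}(x,x) dF(x). -/
theorem vstatistic_biased {S Ω : Type*} [MeasurableSpace S] [MeasurableSpace Ω]
    (P : Measure Ω) [IsProbabilityMeasure P]
    (F G : Measure S) [IsProbabilityMeasure F] [IsProbabilityMeasure G]
    (K : S → S → ℝ)
    (hKmeas : Measurable (Function.uncurry K))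
    (hKbdd : ∃ C : ℝ, ∀ x y, |K x y| ≤ C)
    (hKsymm : ∀ x y, K x y = K y x)
    (n : ℕ) (hn : 1 ≤ n) (X : Fin n → Ω → S)
    (hXmeas : ∀ i, Measurable (X i))
    (hXindep : iIndepFun X P)
    (hXdist : ∀ i, Measure.map (X i) P = F) :
    ∫ ω, (1 / (n : ℝ) ^ 2) * ∑ i, ∑ j, kcen K G (X i ω) (X j ω) ∂P
      = (((n : ℝ) - 1) / n) * quadDist K F G + (1 / (n : ℝ)) * ∫ x, kcen K G x x ∂F := by
  classical
  obtain ⟨C₀, hC₀⟩ := hKbdd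
  set C : ℝ := max C₀ 0 with hCdef
  have hC : ∀ x y, |K x y| ≤ C := fun x y => (hC₀ x y).trans (le_max_left _ _)
  -- basic objects
  set b : S → ℝ := fun x => ∫ t, K x t ∂G with hbdef
  set a : S → ℝ := fun x => ∫ t, K x t ∂F with hadef
  set c : ℝ := ∫ s, b s ∂G with hcdef
  have hbsm : StronglyMeasurable b :=
    hKmeas.stronglyMeasurable.integral_prod_right (ν := G)
  have hasm : StronglyMeasurable a :=
    hKmeas.stronglyMeasurable.integral_prod_right (ν := F)
  have hbbd : ∀ x, |b x| ≤ C := fun x => int_bound (fun t => hC x t)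
  have habd : ∀ x, |a x| ≤ C := fun x => int_bound (fun t => hC x t)
  have hcbd : |c| ≤ C := int_bound hbbd
  -- the centered kernel in terms of b and c
  have hkcen : ∀ x y, kcen K G x y = K x y - b x - b y + c := by
    intro x y
    have h1 : (∫ s, K s y ∂G) = b y :=
      integral_congr_ae (ae_of_all _ fun s => hKsymm s y)
    simp only [kcen, h1, hbdef, hcdef]
  have hkbd : ∀ x y, |kcen K G x y| ≤ C + C + C + C := by
    intro x y
    rw [hkcen]
    have h1 := abs_le.mp (hC x y); have h2 := abs_le.mp (hbbd x)
    have h3 := abs_le.mp (hbbd y); have h4 := abs_le.mp hcbd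
    exact abs_le.mpr ⟨by linarith [h1.1, h2.2, h3.2, h4.1], by linarith [h1.2, h2.1, h3.1, h4.2]⟩
  have hksm : StronglyMeasurable (fun p : S × S => kcen K G p.1 p.2) := by
    have : (fun p : S × S => kcen K G p.1 p.2)
        = fun p : S × S => Function.uncurry K p - b p.1 - b p.2 + c := by
      funext p; exact hkcen p.1 p.2
    rw [this]
    exact ((hKmeas.stronglyMeasurable.sub (hbsm.comp_measurable measurable_fst)).sub
      (hbsm.comp_measurable measurable_snd)).add stronglyMeasurable_const
  -- integrabilities
  have hKxF : ∀ x : S, Integrable (fun y => K x y) F := fun x =>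
    integrable_of_bdd (hKmeas.of_uncurry_left).aestronglyMeasurable (hC x)
  have hbF : Integrable b F := integrable_of_bdd hbsm.aestronglyMeasurable hbbd
  have haF : Integrable a F := integrable_of_bdd hasm.aestronglyMeasurable habd
  have hbG : Integrable b G := integrable_of_bdd hbsm.aestronglyMeasurable hbbd
  have haG : Integrable a G := integrable_of_bdd hasm.aestronglyMeasurable habd
  -- the key product-integral identity
  have Qeq : ∫ p : S × S, kcen K G p.1 p.2 ∂(F.prod F) = quadDist K F G := by
    have hkint : Integrable (fun p : S × S => kcen K G p.1 p.2) (F.prod F) :=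
      integrable_of_bdd hksm.aestronglyMeasurable (fun p => hkbd p.1 p.2)
    rw [integral_prod _ hkint]
    have hinner : ∀ x : S, (∫ y, kcen K G x y ∂F) = a x - b x - (∫ y, b y ∂F) + c := by
      intro x
      have : (fun y => kcen K G x y) = fun y => (K x y - b x - b y) + c := by
        funext y; exact hkcen x y
      rw [this]
      calc ∫ y, (K x y - b x - b y + c) ∂F
          = (∫ y, (K x y - b x - b y) ∂F) + ∫ _, c ∂F :=
            integral_add (((hKxF x).sub (integrable_const _)).sub hbF) (integrable_const _)
        _ = ((∫ y, (K x y - b x) ∂F) - ∫ y, b y ∂F) + ∫ _, c ∂F :=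
            congrArg (· + ∫ _, c ∂F) (integral_sub ((hKxF x).sub (integrable_const _)) hbF)
        _ = (((∫ y, K x y ∂F) - ∫ _, b x ∂F) - ∫ y, b y ∂F) + ∫ _, c ∂F :=
            congrArg (fun z => (z - ∫ y, b y ∂F) + ∫ _, c ∂F)
              (integral_sub (hKxF x) (integrable_const _))
        _ = a x - b x - (∫ y, b y ∂F) + c := by simp [hadef]
    calc (∫ x, ∫ y, kcen K G x y ∂F ∂F)
        = ∫ x, (a x - b x - (∫ y, b y ∂F) + c) ∂F := integral_congr_ae (ae_of_all _ hinner)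
      _ = (∫ x, a x ∂F) - (∫ x, b x ∂F) - (∫ y, b y ∂F) + c := by
          calc ∫ x, (a x - b x - (∫ y, b y ∂F) + c) ∂F
              = (∫ x, (a x - b x - (∫ y, b y ∂F)) ∂F) + ∫ _, c ∂F :=
                integral_add (((haF).sub hbF).sub (integrable_const _)) (integrable_const _)
            _ = ((∫ x, (a x - b x) ∂F) - ∫ _, (∫ y, b y ∂F) ∂F) + ∫ _, c ∂F :=
                congrArg (· + ∫ _, c ∂F) (integral_sub ((haF).sub hbF) (integrable_const _))
            _ = (((∫ x, a x ∂F) - ∫ x, b x ∂F) - ∫ _, (∫ y, b y ∂F) ∂F) + ∫ _, c ∂F :=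
                congrArg (fun z => (z - ∫ _, (∫ y, b y ∂F) ∂F) + ∫ _, c ∂F)
                  (integral_sub haF hbF)
            _ = (∫ x, a x ∂F) - (∫ x, b x ∂F) - (∫ y, b y ∂F) + c := by simp
      _ = quadDist K F G := by
          have hswap : (∫ s, a s ∂G) = ∫ t, b t ∂F := by
            have hKint : Integrable (Function.uncurry K) (G.prod F) :=
              integrable_of_bdd hKmeas.aestronglyMeasurable (fun p => hC p.1 p.2)
            have := integral_integral_swap (μ := G) (ν := F) (f := K) hKint
            rw [hadef]
            rw [this]
            refine integral_congr_ae (ae_of_all _ fun t => ?_)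
            exact integral_congr_ae (ae_of_all _ fun s => hKsymm s t)
          rw [quadDist, integral_sub haF hbF, integral_sub haG hbG, hswap]
          rw [hcdef]
          ring
  -- per-pair expectations
  set Q : ℝ := quadDist K F G with hQdef
  set D : ℝ := ∫ x, kcen K G x x ∂F with hDdef
  have hpair : ∀ i j, (∫ ω, kcen K G (X i ω) (X j ω) ∂P) = if i = j then D else Q := by
    intro i j
    by_cases hij : i = j
    · subst hij
      have hdsm : StronglyMeasurable (fun x : S => kcen K G x x) :=
        hksm.comp_measurable (measurable_id.prodMk measurable_id)
      rw [if_pos rfl, hDdef, ← hXdist i]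
      exact (integral_map (hXmeas i).aemeasurable hdsm.aestronglyMeasurable).symm
    · rw [if_neg hij]
      have hmap : Measure.map (fun ω => (X i ω, X j ω)) P = F.prod F := by
        rw [(indepFun_iff_map_prod_eq_prod_map_map (hXmeas i).aemeasurable
          (hXmeas j).aemeasurable).mp (hXindep.indepFun hij), hXdist i, hXdist j]
      have := integral_map (μ := P) ((hXmeas i).prodMk (hXmeas j)).aemeasurable
        (f := fun p : S × S => kcen K G p.1 p.2)
        (by rw [hmap]; exact hksm.aestronglyMeasurable)
      rw [hmap] at this
      rw [← this, Qeq]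
  -- integrability of each summand
  have hterm : ∀ i j, Integrable (fun ω => kcen K G (X i ω) (X j ω)) P := by
    intro i j
    exact integrable_of_bdd
      (hksm.comp_measurable ((hXmeas i).prodMk (hXmeas j))).aestronglyMeasurable
      (fun ω => hkbd _ _)
  -- put it together
  have hint : (∫ ω, (1 / (n : ℝ) ^ 2) * ∑ i, ∑ j, kcen K G (X i ω) (X j ω) ∂P)
      = (1 / (n : ℝ) ^ 2) * ∑ i, ∑ j, ∫ ω, kcen K G (X i ω) (X j ω) ∂P := by
    rw [integral_const_mul]
    congr 1
    rw [integral_finset_sum _ (fun i _ => integrable_finset_sum _ (fun j _ => hterm i j))]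
    exact Finset.sum_congr rfl fun i _ => integral_finset_sum _ (fun j _ => hterm i j)
  rw [hint]
  have hsum : (∑ i, ∑ j, ∫ ω, kcen K G (X i ω) (X j ω) ∂P)
      = (n : ℝ) * ((D - Q) + (n : ℝ) * Q) := by
    have hrow : ∀ i : Fin n, (∑ j, if i = j then D else Q) = (D - Q) + (n : ℝ) * Q := by
      intro i
      have : (fun j : Fin n => if i = j then D else Q)
          = fun j => (if i = j then D - Q else 0) + Q := by
        funext j; by_cases h : i = j <;> simp [h]
      rw [this, Finset.sum_add_distrib, Finset.sum_ite_eq, Finset.sum_const]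
      simp [mul_comm]
    calc (∑ i, ∑ j, ∫ ω, kcen K G (X i ω) (X j ω) ∂P)
        = ∑ i : Fin n, ((D - Q) + (n : ℝ) * Q) := by
          refine Finset.sum_congr rfl fun i _ => ?_
          rw [← hrow i]
          exact Finset.sum_congr rfl fun j _ => hpair i j
      _ = (n : ℝ) * ((D - Q) + (n : ℝ) * Q) := by
          rw [Finset.sum_const, Finset.card_univ, Fintype.card_fin, nsmul_eq_mul]
  rw [hsum]
  have hn' : (n : ℝ) ≠ 0 := Nat.cast_ne_zero.mpr (by omega)
  field_simp
  ring
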